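/- For every u ∈ K(H), the operator φ_t(u) is a compact operator on ℓ²(I) for each t ∈ T, and the map ū : T → K(ℓ²(I)), t ↦ φ_t(u), is continuous for the operator norm; moreover, the resulting map K(H) → C(T, K(ℓ²(I))), u ↦ ū, is an injective *-homomorphism into the C*-algebra of continuous K(ℓ²(I))-valued functions on T. -/

import Mathlib

open scoped ComplexOrder

noncomputable section

abbrev ell2 (I : Type*) : Type _ := lp (fun _ : I => ℂ) 2

/-- `n`-th singular value of an operator: distance to operators of rank `< n`. -/
def sval {F : Type*} [NormedAddCommGroup F] [InnerProductSpace ℂ F] (n : ℕ)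
    (a : F →L[ℂ] F) : ℝ :=
  sInf {r : ℝ | ∃ b : F →L[ℂ] F,
    Module.rank ℂ (LinearMap.range (b : F →ₗ[ℂ] F)) < n ∧ r = ‖a - b‖}

/-- rank one operator `z ↦ ⟨z, y⟩ • x` (inner ℂ product linear in the first variable). -/
def rankOne {F : Type*} [NormedAddCommGroup F] [InnerProductSpace ℂ F] (x y : F) :
    F →L[ℂ] F :=
  (ContinuousLinearMap.toSpanSingleton ℂ x).comp ((innerSL ℂ) y)

variable {T I : Type*} [TopologicalSpace T] [CompactSpace T] [T2Space T]

/-- membership in the Hilbert right `C(T,ℂ)`-module `H = ⊕_i p_i E`. -/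
def MemH (p : I → C(T, ℂ)) (ξ : I → C(T, ℂ)) : Prop :=
  (∀ i, p i * ξ i = ξ i) ∧ Summable fun i => star (ξ i) * ξ i

/-- the `E`-valued inner product of `H`, `⟨ξ, η⟩ = ∑ i, η i * * ξ i`. -/
def hinner (ξ η : I → C(T, ℂ)) : C(T, ℂ) := ∑' i, star (η i) * ξ i

/-- the norm of `H`. -/
def hnorm (ξ : I → C(T, ℂ)) : ℝ := Real.sqrt ‖hinner ξ ξ‖

/-- adjointable operators on `H`, i.e. the elements of `L_E(H)`. -/
structure Adjointable (p : I → C(T, ℂ)) where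
  toFun : (I → C(T, ℂ)) → (I → C(T, ℂ))
  adj : (I → C(T, ℂ)) → (I → C(T, ℂ))
  mem' : ∀ ξ, MemH p ξ → MemH p (toFun ξ)
  adj_mem' : ∀ ξ, MemH p ξ → MemH p (adj ξ)
  map_add' : ∀ ξ η, MemH p ξ → MemH p η → toFun (ξ + η) = toFun ξ + toFun η
  map_smul' : ∀ (x : C(T, ℂ)) ξ, MemH p ξ →
    toFun (fun i => ξ i * x) = fun i => toFun ξ i * x
  bound' : ∃ C : ℝ, ∀ ξ, MemH p ξ → hnorm (toFun ξ) ≤ C * hnorm ξ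
  inner_adj' : ∀ ξ η, MemH p ξ → MemH p η → hinner (toFun ξ) η = hinner ξ (adj η)

/-- `a : ℓ²(I) → ℓ²(I)` represents `φ_t u := ψ_t ∘ u ∘ ψ`. -/
def Represents (p : I → C(T, ℂ)) (t : T)
    (u : (I → C(T, ℂ)) → (I → C(T, ℂ))) (a : ell2 I →L[ℂ] ell2 I) : Prop :=
  ∀ ζ : ell2 I, ∀ i : I, (a ζ : ∀ _ : I, ℂ) i = u (fun j => ((ζ : ∀ _ : I, ℂ) j) • p j) i t

/-- membership in `K(H)`: uniform approximation, on the unit ball of `H`, by finite sums of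
rank one module operators. -/
def CompactH (p : I → C(T, ℂ)) (u : (I → C(T, ℂ)) → (I → C(T, ℂ))) : Prop :=
  ∀ ε : ℝ, 0 < ε → ∃ (m : ℕ) (ξs ηs : Fin m → (I → C(T, ℂ))),
    (∀ k, MemH p (ξs k) ∧ MemH p (ηs k)) ∧
    ∀ ζ, MemH p ζ → hnorm ζ ≤ 1 →
      hnorm (fun i => u ζ i - ∑ k, ξs k i * hinner ζ (ηs k)) ≤ ε

/-- `u ∈ L^p(E,H)`, expressed through a family `A` of representatives of the `φ_t u`:
the family `(θ_n(u)^p)ₙ` is summable in `E`. -/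
def InLp {I : Type*} (pp : ℝ) (A : T → (ell2 I →L[ℂ] ell2 I)) : Prop :=
  ∃ Θ : ℕ → C(T, ℝ), (∀ n t, Θ n t = sval (n + 1) (A t) ^ pp) ∧ Summable Θ

/-- the norm `‖u‖_p = ‖∑ₙ θ_n(u)^p‖^(1/p)`. -/
def pnorm {I : Type*} (pp : ℝ) (A : T → (ell2 I →L[ℂ] ell2 I)) : ℝ :=
  (⨆ t : T, ∑' n : ℕ, sval (n + 1) (A t) ^ pp) ^ (1 / pp)

/-- the operator norm of an element of `L_E(H)`. -/
def opNormH (p : I → C(T, ℂ)) (u : Adjointable p) : ℝ :=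
  ⨆ ξ : {ξ : I → C(T, ℂ) // MemH p ξ ∧ hnorm ξ ≤ 1}, hnorm (u.toFun ξ)

end

open scoped ENNReal
set_option linter.unusedSectionVars false
set_option maxHeartbeats 1000000

noncomputable section Dev

open Filter Topology

variable {T I : Type*} [TopologicalSpace T] [CompactSpace T] [T2Space T]


lemma hasSum_eval {f : I → C(T,ℂ)} {S : C(T,ℂ)} (hf : HasSum f S) (t : T) :
    HasSum (fun i => f i t) (S t) := by
  have := hf.mapL (ContinuousMap.evalCLM ℂ t)
  simpa [ContinuousMap.evalCLM] using this

lemma cm_tsum_apply {f : I → C(T,ℂ)} (hf : Summable f) (t : T) :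
    (∑' i, f i) t = ∑' i, f i t := ((hasSum_eval hf.hasSum t).tsum_eq).symm

lemma star_mul_self_apply (f : C(T,ℂ)) (t : T) :
    (star f * f) t = (‖f t‖^2 : ℝ) := by
  simp [ContinuousMap.mul_apply]
  rw [← Complex.normSq_eq_conj_mul_self, Complex.normSq_eq_norm_sq]
  norm_cast

-- partial sums of |ξ i t|^2 bounded by ‖tsum‖
lemma sum_sq_le {ξ : I → C(T,ℂ)} (hξ : Summable fun i => star (ξ i) * ξ i)
    (F : Finset I) (t : T) :
    ∑ i ∈ F, ‖ξ i t‖^2 ≤ ‖∑' i, star (ξ i) * ξ i‖ := by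
  have h1 : HasSum (fun i => (star (ξ i) * ξ i) t) ((∑' i, star (ξ i) * ξ i) t) :=
    hasSum_eval hξ.hasSum t
  have h2 : HasSum (fun i => ‖ξ i t‖^2) (((∑' i, star (ξ i) * ξ i) t).re) := by
    have := h1.mapL Complex.reCLM
    convert this using 2 with i
    rw [star_mul_self_apply]
    simp [← Complex.ofReal_pow]
    rfl
  calc ∑ i ∈ F, ‖ξ i t‖^2 ≤ ((∑' i, star (ξ i) * ξ i) t).re :=
        sum_le_hasSum F (fun i _ => by positivity) h2
    _ ≤ ‖(∑' i, star (ξ i) * ξ i) t‖ := Complex.re_le_norm _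
    _ ≤ ‖∑' i, star (ξ i) * ξ i‖ := ContinuousMap.norm_coe_le_norm _ t

lemma hasSum_sq_eval {ξ : I → C(T,ℂ)} (hξ : Summable fun i => star (ξ i) * ξ i) (t : T) :
    HasSum (fun i => ‖ξ i t‖^2) (((∑' i, star (ξ i) * ξ i) t).re) := by
  have := (hasSum_eval hξ.hasSum t).mapL Complex.reCLM
  convert this using 2 with i
  rw [star_mul_self_apply]
  simp [← Complex.ofReal_pow]
  rfl

lemma two_toReal : (2 : ℝ≥0∞).toReal = 2 := by norm_num

lemma rpow_two_eq (x : ℝ) (hx : 0 ≤ x) : x ^ (2 : ℝ≥0∞).toReal = x ^ 2 := by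
  rw [two_toReal, Real.rpow_two]

lemma memℓp_eval {ξ : I → C(T,ℂ)} (hξ : Summable fun i => star (ξ i) * ξ i) (t : T) :
    Memℓp (fun i => ξ i t) 2 := by
  apply memℓp_gen' (C := ‖∑' i, star (ξ i) * ξ i‖)
  intro F
  calc ∑ i ∈ F, ‖ξ i t‖ ^ (2:ℝ≥0∞).toReal = ∑ i ∈ F, ‖ξ i t‖ ^ 2 := by
        refine Finset.sum_congr rfl fun i _ => rpow_two_eq _ (norm_nonneg _)
    _ ≤ _ := sum_sq_le hξ F t

/-- `ψ_t ξ` as an element of `ℓ²(I)`. -/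
def psit (ξ : I → C(T,ℂ)) (hξ : Summable fun i => star (ξ i) * ξ i) (t : T) : ell2 I :=
  ⟨fun i => ξ i t, memℓp_eval hξ t⟩

@[simp] lemma psit_apply (ξ : I → C(T,ℂ)) (hξ : Summable fun i => star (ξ i) * ξ i)
    (t : T) (i : I) : (psit ξ hξ t : ∀ _ : I, ℂ) i = ξ i t := rfl

lemma ell2_norm_le {x : ell2 I} {c : ℝ} (hc : 0 ≤ c)
    (h : ∀ F : Finset I, ∑ i ∈ F, ‖(x : ∀ _ : I, ℂ) i‖^2 ≤ c^2) : ‖x‖ ≤ c := by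
  refine lp.norm_le_of_forall_sum_le (by norm_num) hc fun F => ?_
  calc ∑ i ∈ F, ‖(x : ∀ _ : I, ℂ) i‖ ^ (2:ℝ≥0∞).toReal
      = ∑ i ∈ F, ‖(x : ∀ _ : I, ℂ) i‖ ^ 2 := by
        refine Finset.sum_congr rfl fun i _ => rpow_two_eq _ (norm_nonneg _)
    _ ≤ c^2 := h F
    _ = c ^ (2:ℝ≥0∞).toReal := (rpow_two_eq _ hc).symm

lemma psit_norm_le {ξ : I → C(T,ℂ)} (hξ : Summable fun i => star (ξ i) * ξ i) (t : T) :
    ‖psit ξ hξ t‖ ≤ hnorm ξ := by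
  refine ell2_norm_le (Real.sqrt_nonneg _) fun F => ?_
  rw [hnorm, Real.sq_sqrt (norm_nonneg _)]
  exact sum_sq_le hξ F t

lemma norm_sum_starmul_eval (f : I → C(T,ℂ)) (F : Finset I) (t : T) :
    ‖(∑ i ∈ F, star (f i) * f i) t‖ = ∑ i ∈ F, ‖f i t‖^2 := by
  have : (∑ i ∈ F, star (f i) * f i) t = ∑ i ∈ F, ((‖f i t‖^2 : ℝ) : ℂ) := by
    rw [ContinuousMap.sum_apply]
    exact Finset.sum_congr rfl fun i _ => star_mul_self_apply (f i) t
  rw [this, ← Complex.ofReal_sum, Complex.norm_real,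
    Real.norm_of_nonneg (by positivity)]

lemma summable_of_finset_norm_le {f g : I → C(T,ℂ)} (hg : Summable g)
    (h : ∀ F : Finset I, ‖∑ i ∈ F, f i‖ ≤ ‖∑ i ∈ F, g i‖) : Summable f := by
  rw [summable_iff_vanishing_norm] at hg ⊢
  intro ε hε
  obtain ⟨s, hs⟩ := hg ε hε
  exact ⟨s, fun F hF => lt_of_le_of_lt (h F) (hs F hF)⟩

lemma summable_sq_of_le {δ ξ η : I → C(T,ℂ)} {c : ℝ} (hc : 0 ≤ c)
    (hξ : Summable fun i => star (ξ i) * ξ i) (hη : Summable fun i => star (η i) * η i)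
    (hpt : ∀ i t, ‖δ i t‖^2 ≤ c * (‖ξ i t‖^2 + ‖η i t‖^2)) :
    Summable fun i => star (δ i) * δ i := by
  have hg : Summable fun i => (c:ℂ) • (star (ξ i) * ξ i + star (η i) * η i) :=
    (hξ.add hη).const_smul _
  refine summable_of_finset_norm_le hg fun F => ?_
  have h0 : (0:ℝ) ≤ ‖∑ i ∈ F, (c:ℂ) • (star (ξ i) * ξ i + star (η i) * η i)‖ := norm_nonneg _
  rw [ContinuousMap.norm_le _ h0]
  intro t
  rw [norm_sum_starmul_eval]
  have : (∑ i ∈ F, (c:ℂ) • (star (ξ i) * ξ i + star (η i) * η i)) t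
      = ∑ i ∈ F, ((c * (‖ξ i t‖^2 + ‖η i t‖^2) : ℝ) : ℂ) := by
    rw [ContinuousMap.sum_apply]
    refine Finset.sum_congr rfl fun i _ => ?_
    simp only [ContinuousMap.smul_apply, ContinuousMap.add_apply,
      star_mul_self_apply, smul_eq_mul]
    push_cast
    ring
  calc ∑ i ∈ F, ‖δ i t‖^2 ≤ ∑ i ∈ F, c * (‖ξ i t‖^2 + ‖η i t‖^2) :=
        Finset.sum_le_sum fun i _ => hpt i t
    _ = ‖(∑ i ∈ F, (c:ℂ) • (star (ξ i) * ξ i + star (η i) * η i)) t‖ := by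
        rw [this, ← Complex.ofReal_sum, Complex.norm_real,
          Real.norm_of_nonneg (by positivity)]
    _ ≤ _ := ContinuousMap.norm_coe_le_norm _ t

/-- summability of the inner product family (module Cauchy–Schwarz via finite CS). -/
lemma summable_hinner {ξ η : I → C(T,ℂ)} (hξ : Summable fun i => star (ξ i) * ξ i)
    (hη : Summable fun i => star (η i) * η i) :
    Summable fun i => star (η i) * ξ i := by
  rw [summable_iff_vanishing_norm]
  intro ε hε
  set B : ℝ := ‖∑' i, star (ξ i) * ξ i‖ with hB
  have hB0 : 0 ≤ B := norm_nonneg _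
  have hε' : (0:ℝ) < (ε / (Real.sqrt B + 1))^2 := by positivity
  obtain ⟨s, hs⟩ := summable_iff_vanishing_norm.1 hη _ hε'
  refine ⟨s, fun F hF => ?_⟩
  have key : ∀ t, ‖(∑ i ∈ F, star (η i) * ξ i) t‖ ≤ ε * Real.sqrt B / (Real.sqrt B + 1) := by
    intro t
    have h1 : ‖(∑ i ∈ F, star (η i) * ξ i) t‖ ≤ ∑ i ∈ F, ‖η i t‖ * ‖ξ i t‖ := by
      rw [ContinuousMap.sum_apply]
      refine (norm_sum_le _ _).trans (le_of_eq (Finset.sum_congr rfl fun i _ => ?_))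
      simp [ContinuousMap.mul_apply, norm_mul]
    have h2 : (∑ i ∈ F, ‖η i t‖ * ‖ξ i t‖)^2 ≤ (∑ i ∈ F, ‖η i t‖^2) * ∑ i ∈ F, ‖ξ i t‖^2 :=
      Finset.sum_mul_sq_le_sq_mul_sq F _ _
    have h3 : ∑ i ∈ F, ‖η i t‖^2 ≤ (ε / (Real.sqrt B + 1))^2 := by
      calc ∑ i ∈ F, ‖η i t‖^2 = ‖(∑ i ∈ F, star (η i) * η i) t‖ :=
            (norm_sum_starmul_eval η F t).symm
        _ ≤ ‖∑ i ∈ F, star (η i) * η i‖ := ContinuousMap.norm_coe_le_norm _ t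
        _ ≤ (ε / (Real.sqrt B + 1))^2 := (hs F hF).le
    have h4 : ∑ i ∈ F, ‖ξ i t‖^2 ≤ B := sum_sq_le hξ F t
    have h5 : (∑ i ∈ F, ‖η i t‖ * ‖ξ i t‖)^2 ≤ ((ε / (Real.sqrt B + 1)) * Real.sqrt B)^2 := by
      calc (∑ i ∈ F, ‖η i t‖ * ‖ξ i t‖)^2 ≤ (∑ i ∈ F, ‖η i t‖^2) * ∑ i ∈ F, ‖ξ i t‖^2 := h2
        _ ≤ (ε / (Real.sqrt B + 1))^2 * B := by
            refine mul_le_mul h3 h4 (Finset.sum_nonneg fun i _ => by positivity) (by positivity)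
        _ = ((ε / (Real.sqrt B + 1)) * Real.sqrt B)^2 := by
            rw [mul_pow, Real.sq_sqrt hB0]
    have h6 : ∑ i ∈ F, ‖η i t‖ * ‖ξ i t‖ ≤ (ε / (Real.sqrt B + 1)) * Real.sqrt B := by
      have h7 := Real.sqrt_le_sqrt h5
      rwa [Real.sqrt_sq (Finset.sum_nonneg fun i _ => by positivity),
        Real.sqrt_sq (by positivity)] at h7
    calc ‖(∑ i ∈ F, star (η i) * ξ i) t‖ ≤ ∑ i ∈ F, ‖η i t‖ * ‖ξ i t‖ := h1
      _ ≤ (ε / (Real.sqrt B + 1)) * Real.sqrt B := h6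
      _ = ε * Real.sqrt B / (Real.sqrt B + 1) := by ring
  have hlt : ε * Real.sqrt B / (Real.sqrt B + 1) < ε := by
    rw [div_lt_iff₀ (by positivity)]
    nlinarith [Real.sqrt_nonneg B]
  calc ‖∑ i ∈ F, star (η i) * ξ i‖ ≤ ε * Real.sqrt B / (Real.sqrt B + 1) := by
        rw [ContinuousMap.norm_le _ (by positivity)]
        exact key
    _ < ε := hlt

section P
variable {p : I → C(T,ℂ)} (hp : ∀ i t, p i t = 0 ∨ p i t = 1)

include hp

lemma p_norm_le (i : I) : ‖p i‖ ≤ 1 := by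
  rw [ContinuousMap.norm_le _ zero_le_one]
  intro t
  rcases hp i t with h | h <;> simp [h]

lemma memH_psi (ζ : ell2 I) : MemH p (fun j => (ζ : ∀ _ : I, ℂ) j • p j) := by
  constructor
  · intro i
    ext t
    rcases hp i t with h | h <;>
      simp [ContinuousMap.mul_apply, ContinuousMap.smul_apply, h]
  · have hsum : Summable fun j => ‖(ζ : ∀ _ : I, ℂ) j‖^2 := by
      have := (lp.memℓp ζ).summable (by norm_num : 0 < (2:ℝ≥0∞).toReal)
      refine this.congr fun j => ?_
      exact rpow_two_eq _ (norm_nonneg _)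
    refine Summable.of_norm_bounded hsum fun j => ?_
    have : star ((ζ : ∀ _ : I, ℂ) j • p j) * ((ζ : ∀ _ : I, ℂ) j • p j)
        = (‖(ζ : ∀ _ : I, ℂ) j‖^2 : ℝ) • (star (p j) * p j) := by
      have hc : ((‖(ζ : ∀ _ : I, ℂ) j‖^2 : ℝ) : ℂ)
          = (starRingEnd ℂ) ((ζ : ∀ _ : I, ℂ) j) * (ζ : ∀ _ : I, ℂ) j := by
        rw [← Complex.normSq_eq_conj_mul_self, Complex.normSq_eq_norm_sq]
      ext t
      simp only [ContinuousMap.mul_apply, ContinuousMap.smul_apply, ContinuousMap.star_apply,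
        smul_eq_mul, Complex.real_smul, Complex.star_def, map_mul]
      rw [hc]
      ring
    rw [this, norm_smul]
    have h1 : ‖star (p j) * p j‖ ≤ 1 := by
      calc ‖star (p j) * p j‖ ≤ ‖star (p j)‖ * ‖p j‖ := norm_mul_le _ _
        _ ≤ 1 * 1 := by
            refine mul_le_mul ?_ (p_norm_le hp j) (norm_nonneg _) zero_le_one
            rw [norm_star]; exact p_norm_le hp j
        _ = 1 := by norm_num
    calc ‖(‖(ζ : ∀ _ : I, ℂ) j‖^2 : ℝ)‖ * ‖star (p j) * p j‖
        ≤ ‖(‖(ζ : ∀ _ : I, ℂ) j‖^2 : ℝ)‖ * 1 := by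
          exact mul_le_mul_of_nonneg_left h1 (norm_nonneg _)
      _ = ‖(ζ : ∀ _ : I, ℂ) j‖^2 := by
          rw [mul_one, Real.norm_of_nonneg (by positivity)]

end P

lemma memH_zero {p : I → C(T,ℂ)} : MemH p (fun _ => 0) :=
  ⟨fun i => by simp, by simpa using summable_zero⟩

lemma memH_add {p : I → C(T,ℂ)} {ξ η : I → C(T,ℂ)} (hξ : MemH p ξ) (hη : MemH p η) :
    MemH p (fun i => ξ i + η i) := by
  refine ⟨fun i => by rw [mul_add, hξ.1 i, hη.1 i], ?_⟩
  refine summable_sq_of_le (by norm_num : (0:ℝ) ≤ 2) hξ.2 hη.2 fun i t => ?_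
  rw [ContinuousMap.add_apply]
  have h1 := norm_add_le (ξ i t) (η i t)
  have h2 : ‖ξ i t + η i t‖^2 ≤ (‖ξ i t‖ + ‖η i t‖)^2 :=
    pow_le_pow_left₀ (norm_nonneg _) h1 2
  nlinarith [sq_nonneg (‖ξ i t‖ - ‖η i t‖)]

lemma memH_sub {p : I → C(T,ℂ)} {ξ η : I → C(T,ℂ)} (hξ : MemH p ξ) (hη : MemH p η) :
    MemH p (fun i => ξ i - η i) := by
  refine ⟨fun i => by rw [mul_sub, hξ.1 i, hη.1 i], ?_⟩
  refine summable_sq_of_le (by norm_num : (0:ℝ) ≤ 2) hξ.2 hη.2 fun i t => ?_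
  rw [ContinuousMap.sub_apply]
  have h1 := norm_sub_le (ξ i t) (η i t)
  have h2 : ‖ξ i t - η i t‖^2 ≤ (‖ξ i t‖ + ‖η i t‖)^2 :=
    pow_le_pow_left₀ (norm_nonneg _) h1 2
  nlinarith [sq_nonneg (‖ξ i t‖ - ‖η i t‖)]

lemma memH_mul {p : I → C(T,ℂ)} {ξ : I → C(T,ℂ)} (hξ : MemH p ξ) (x : C(T,ℂ)) :
    MemH p (fun i => ξ i * x) := by
  refine ⟨fun i => by rw [← mul_assoc, hξ.1 i], ?_⟩
  have : (fun i => star (ξ i * x) * (ξ i * x)) = fun i => (star (ξ i) * ξ i) * (star x * x) := by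
    funext i
    simp only [star_mul]
    ring
  rw [this]
  exact hξ.2.mul_right _

lemma memH_finsum {p : I → C(T,ℂ)} {κ : Type*} (s : Finset κ) (g : κ → I → C(T,ℂ))
    (h : ∀ k ∈ s, MemH p (g k)) : MemH p (fun i => ∑ k ∈ s, g k i) := by
  classical
  induction s using Finset.induction_on with
  | empty => simpa using memH_zero
  | @insert a s' hk ih =>
    have h1 : MemH p (g a) := h a (Finset.mem_insert_self a s')
    have h2 : MemH p (fun i => ∑ k ∈ s', g k i) := ih fun k hks => h k (Finset.mem_insert_of_mem hks)
    have := memH_add h1 h2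
    refine ⟨fun i => ?_, ?_⟩
    · simp only [Finset.sum_insert hk]
      exact this.1 i
    · refine this.2.congr fun i => ?_
      simp only [Finset.sum_insert hk]

lemma hinner_apply {ξ η : I → C(T,ℂ)} (hξ : Summable fun i => star (ξ i) * ξ i)
    (hη : Summable fun i => star (η i) * η i) (t : T) :
    hinner ξ η t = ∑' i, (starRingEnd ℂ) (η i t) * ξ i t := by
  rw [hinner, cm_tsum_apply (summable_hinner hξ hη) t]
  rfl

lemma hnorm_sq {ξ : I → C(T,ℂ)} : hnorm ξ ^ 2 = ‖hinner ξ ξ‖ := by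
  rw [hnorm, Real.sq_sqrt (norm_nonneg _)]

lemma sum_sq_le_hnorm {p : I → C(T,ℂ)} {ξ : I → C(T,ℂ)} (hξ : MemH p ξ) (F : Finset I) (t : T) :
    ∑ i ∈ F, ‖ξ i t‖^2 ≤ hnorm ξ ^ 2 := by
  rw [hnorm_sq]
  exact sum_sq_le hξ.2 F t

lemma hnorm_nonneg (ξ : I → C(T,ℂ)) : 0 ≤ hnorm ξ := Real.sqrt_nonneg _

/-- locality: if `ξ` vanishes at `t` coordinatewise, then so does `u ξ`. -/
lemma local_vanish {p : I → C(T,ℂ)} (u : Adjointable p) {ξ : I → C(T,ℂ)} (hξ : MemH p ξ)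
    {t : T} (h0 : ∀ j, ξ j t = 0) (i : I) : u.toFun ξ i t = 0 := by
  obtain ⟨C, hC⟩ := u.bound'
  set C' : ℝ := max C 0 with hC'
  have hC'0 : 0 ≤ C' := le_max_right _ _
  have key : ∀ ε : ℝ, 0 < ε → ‖u.toFun ξ i t‖^2 ≤ (C'^2 + 1) * ε := by
    intro ε hε
    -- the function f = ⟨ξ,ξ⟩ vanishes at t
    have hft : hinner ξ ξ t = 0 := by
      rw [hinner_apply hξ.2 hξ.2]
      simp [h0]
    set U : Set T := {s | ‖hinner ξ ξ s‖ < ε} with hU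
    have hUopen : IsOpen U := by
      have : Continuous fun s => ‖hinner ξ ξ s‖ := (map_continuous (hinner ξ ξ)).norm
      exact isOpen_lt this continuous_const
    have htU : t ∈ U := by simp [hU, hft, hε]
    obtain ⟨a, ha0, ha1, ha01⟩ := exists_continuous_zero_one_of_isClosed
      (isClosed_compl_iff.mpr hUopen) (isClosed_singleton (x := t))
      (Set.disjoint_left.mpr fun s hs hs' => by
        rcases hs' with rfl
        exact hs htU)
    set a' : C(T,ℂ) := ⟨fun s => (a s : ℂ), Complex.continuous_ofReal.comp (map_continuous a)⟩
      with ha'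
    have ha't : a' t = 1 := by
      have : a t = 1 := ha1 rfl
      simp [ha', this]
    have ha'bd : ∀ s, ‖a' s‖ ≤ 1 := by
      intro s
      simp only [ha', ContinuousMap.coe_mk, Complex.norm_real]
      rw [Real.norm_of_nonneg (ha01 s).1]
      exact (ha01 s).2
    have ha'U : ∀ s ∉ U, a' s = 0 := by
      intro s hs
      have : a s = 0 := ha0 hs
      simp [ha', this]
    set ξa : I → C(T,ℂ) := fun j => ξ j * a' with hξa
    have hξaMem : MemH p ξa := memH_mul hξ a'
    have huξa : u.toFun ξa = fun j => u.toFun ξ j * a' := u.map_smul' a' ξ hξ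
    -- pointwise bound on ⟨ξa, ξa⟩
    have hbd : ‖hinner ξa ξa‖ ≤ ε := by
      rw [ContinuousMap.norm_le _ hε.le]
      intro s
      have : hinner ξa ξa s = (starRingEnd ℂ) (a' s) * a' s * hinner ξ ξ s := by
        rw [hinner_apply hξaMem.2 hξaMem.2, hinner_apply hξ.2 hξ.2, ← tsum_mul_left]
        refine tsum_congr fun j => ?_
        simp only [hξa, ContinuousMap.mul_apply, map_mul]
        ring
      rw [this]
      by_cases hs : s ∈ U
      · calc ‖(starRingEnd ℂ) (a' s) * a' s * hinner ξ ξ s‖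
            ≤ ‖(starRingEnd ℂ) (a' s)‖ * ‖a' s‖ * ‖hinner ξ ξ s‖ := by
              rw [norm_mul, norm_mul]
          _ ≤ 1 * 1 * ε := by
              have h1 : ‖(starRingEnd ℂ) (a' s)‖ ≤ 1 := by
                rw [RCLike.norm_conj]; exact ha'bd s
              have h2 : ‖hinner ξ ξ s‖ ≤ ε := (hs).le
              have := ha'bd s
              refine mul_le_mul (mul_le_mul h1 this (norm_nonneg _) zero_le_one) h2
                (norm_nonneg _) (by norm_num)
          _ = ε := by norm_num
      · rw [ha'U s hs]
        simpa using hε.le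
    -- conclude
    have h1 : u.toFun ξa i t = u.toFun ξ i t := by
      rw [huξa]
      simp [ContinuousMap.mul_apply, ha't]
    have h2 : ‖u.toFun ξa i t‖^2 ≤ hnorm (u.toFun ξa) ^2 := by
      have := sum_sq_le_hnorm (u.mem' ξa hξaMem) {i} t
      simpa using this
    have h3 : hnorm (u.toFun ξa) ≤ C' * hnorm ξa := by
      refine (hC ξa hξaMem).trans ?_
      exact mul_le_mul_of_nonneg_right (le_max_left _ _) (hnorm_nonneg _)
    have h4 : hnorm (u.toFun ξa)^2 ≤ C'^2 * hnorm ξa^2 := by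
      have := pow_le_pow_left₀ (hnorm_nonneg _) h3 2
      calc hnorm (u.toFun ξa)^2 ≤ (C' * hnorm ξa)^2 := this
        _ = C'^2 * hnorm ξa^2 := by ring
    have h5 : hnorm ξa^2 ≤ ε := by
      rw [hnorm_sq]
      exact hbd
    calc ‖u.toFun ξ i t‖^2 = ‖u.toFun ξa i t‖^2 := by rw [h1]
      _ ≤ hnorm (u.toFun ξa)^2 := h2
      _ ≤ C'^2 * hnorm ξa^2 := h4
      _ ≤ C'^2 * ε := by
          exact mul_le_mul_of_nonneg_left h5 (by positivity)
      _ ≤ (C'^2 + 1) * ε := by nlinarith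
  have hle : ‖u.toFun ξ i t‖^2 ≤ 0 := by
    refine le_of_forall_pos_le_add fun ε hε => ?_
    have := key (ε / (C'^2 + 1)) (by positivity)
    calc ‖u.toFun ξ i t‖^2 ≤ (C'^2+1) * (ε / (C'^2+1)) := this
      _ = ε := by field_simp
      _ = 0 + ε := by ring
  have : ‖u.toFun ξ i t‖ = 0 := by nlinarith [norm_nonneg (u.toFun ξ i t), sq_nonneg (‖u.toFun ξ i t‖)]
  simpa using this

/-- locality: `u ξ i t` only depends on the values `ξ j t`. -/
lemma local_eq {p : I → C(T,ℂ)} (u : Adjointable p) {ξ η : I → C(T,ℂ)}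
    (hξ : MemH p ξ) (hη : MemH p η) {t : T} (h : ∀ j, ξ j t = η j t) (i : I) :
    u.toFun ξ i t = u.toFun η i t := by
  set δ : I → C(T,ℂ) := fun j => ξ j - η j with hδ
  have hδMem : MemH p δ := memH_sub hξ hη
  have hξeq : ξ = η + δ := by
    funext j
    simp [hδ]
  have := u.map_add' η δ hη hδMem
  have happ : u.toFun ξ i t = u.toFun η i t + u.toFun δ i t := by
    rw [hξeq, this]
    simp
  rw [happ, local_vanish u hδMem (fun j => by simp [hδ, ContinuousMap.sub_apply, h j]) i]
  simp

lemma ell2_inner_eq (x y : ell2 I) :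
    (inner ℂ x y : ℂ) = ∑' i, (starRingEnd ℂ) ((x : ∀ _ : I, ℂ) i) * (y : ∀ _ : I, ℂ) i := by
  rw [lp.inner_eq_tsum]
  exact tsum_congr fun i => by simp [RCLike.inner_apply, mul_comm]

lemma pjt_conj {p : I → C(T,ℂ)} (hp : ∀ i t, p i t = 0 ∨ p i t = 1) (j : I) (t : T) :
    (starRingEnd ℂ) (p j t) = p j t := by
  rcases hp j t with h | h <;> simp [h]

/-- part (iii): linearity of `u ↦ ū`. -/
lemma part_e {p : I → C(T,ℂ)} (hp : ∀ i t, p i t = 0 ∨ p i t = 1)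
    (u v : Adjointable p) (t : T) (a b e : ell2 I →L[ℂ] ell2 I) (α β : ℂ)
    (ha : Represents p t u.toFun a) (hb : Represents p t v.toFun b)
    (he : Represents p t (fun ξ => α • u.toFun ξ + β • v.toFun ξ) e) :
    e = α • a + β • b := by
  ext ζ i
  have h1 := he ζ i
  have h2 := ha ζ i
  have h3 := hb ζ i
  simp only [Pi.add_apply, Pi.smul_apply, ContinuousMap.add_apply,
    ContinuousMap.smul_apply, smul_eq_mul] at h1
  have hR : (((α • a + β • b) ζ : ell2 I) : ∀ _ : I, ℂ) i
      = α * ((a ζ : ell2 I) : ∀ _ : I, ℂ) i + β * ((b ζ : ell2 I) : ∀ _ : I, ℂ) i := by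
    simp [ContinuousLinearMap.add_apply, ContinuousLinearMap.smul_apply]
    rfl
  rw [hR, h1, h2, h3]

/-- part (i): multiplicativity of `u ↦ ū`. -/
lemma part_c {p : I → C(T,ℂ)} (hp : ∀ i t, p i t = 0 ∨ p i t = 1)
    (u v : Adjointable p) (t : T) (a b c : ell2 I →L[ℂ] ell2 I)
    (ha : Represents p t u.toFun a) (hb : Represents p t v.toFun b)
    (hc : Represents p t (u.toFun ∘ v.toFun) c) :
    c = a ∘L b := by
  ext ζ i
  have h1 := hc ζ i
  have h2 := ha (b ζ) i
  have hmem : MemH p (fun j => ((ζ : ∀ _ : I, ℂ) j) • p j) := memH_psi hp ζ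
  have hvmem : MemH p (v.toFun (fun j => ((ζ : ∀ _ : I, ℂ) j) • p j)) := v.mem' _ hmem
  have hbmem : MemH p (fun j => ((b ζ : ell2 I) : ∀ _ : I, ℂ) j • p j) := memH_psi hp (b ζ)
  have hloc : ∀ i, u.toFun (fun j => ((b ζ : ell2 I) : ∀ _ : I, ℂ) j • p j) i t
      = u.toFun (v.toFun (fun j => ((ζ : ∀ _ : I, ℂ) j) • p j)) i t := by
    refine local_eq u hbmem hvmem fun j => ?_
    have hbj := hb ζ j
    have hpj := hvmem.1 j
    have := congrArg (fun f => f t) (congrArg ContinuousMap.toFun hpj)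
    simp only [ContinuousMap.smul_apply, smul_eq_mul, hbj]
    calc v.toFun (fun j => ((ζ : ∀ _ : I, ℂ) j) • p j) j t * p j t
        = p j t * v.toFun (fun j => ((ζ : ∀ _ : I, ℂ) j) • p j) j t := by ring
      _ = v.toFun (fun j => ((ζ : ∀ _ : I, ℂ) j) • p j) j t := by
          have := congrArg (fun f : C(T,ℂ) => f t) hpj
          simpa [ContinuousMap.mul_apply] using this
  have hcomp : ((a ∘L b) ζ : ∀ _ : I, ℂ) i = (a (b ζ) : ∀ _ : I, ℂ) i := rfl
  rw [hcomp, h2, h1]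
  exact (hloc i).symm

/-- part (ii): `u ↦ ū` is star-preserving. -/
lemma part_d {p : I → C(T,ℂ)} (hp : ∀ i t, p i t = 0 ∨ p i t = 1)
    (u : Adjointable p) (t : T) (a d : ell2 I →L[ℂ] ell2 I)
    (ha : Represents p t u.toFun a) (hd : Represents p t u.adj d) :
    d = ContinuousLinearMap.adjoint a := by
  rw [ContinuousLinearMap.eq_adjoint_iff]
  intro ζ η
  set ψζ : I → C(T,ℂ) := fun j => ((ζ : ∀ _ : I, ℂ) j) • p j with hψζ
  set ψη : I → C(T,ℂ) := fun j => ((η : ∀ _ : I, ℂ) j) • p j with hψη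
  have hζmem : MemH p ψζ := memH_psi hp ζ
  have hηmem : MemH p ψη := memH_psi hp η
  have humem : MemH p (u.toFun ψη) := u.mem' _ hηmem
  have hadjmem : MemH p (u.adj ψζ) := u.adj_mem' _ hζmem
  have base2 := u.inner_adj' ψη ψζ hηmem hζmem
  -- evaluate both sides at t
  have hL : hinner (u.toFun ψη) ψζ t
      = ∑' j, (starRingEnd ℂ) ((ζ : ∀ _ : I, ℂ) j) * u.toFun ψη j t := by
    rw [hinner_apply humem.2 hζmem.2]
    refine tsum_congr fun j => ?_
    have hpj : p j t * u.toFun ψη j t = u.toFun ψη j t := by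
      have := congrArg (fun f : C(T,ℂ) => f t) (humem.1 j)
      simpa [ContinuousMap.mul_apply] using this
    simp only [hψζ, Pi.smul_apply, ContinuousMap.smul_apply, smul_eq_mul, map_mul, pjt_conj hp]
    calc (starRingEnd ℂ) ((ζ : ∀ _ : I, ℂ) j) * p j t * u.toFun ψη j t
        = (starRingEnd ℂ) ((ζ : ∀ _ : I, ℂ) j) * (p j t * u.toFun ψη j t) := by ring
      _ = (starRingEnd ℂ) ((ζ : ∀ _ : I, ℂ) j) * u.toFun ψη j t := by rw [hpj]
  have hR : hinner ψη (u.adj ψζ) t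
      = ∑' j, (starRingEnd ℂ) (u.adj ψζ j t) * (η : ∀ _ : I, ℂ) j := by
    rw [hinner_apply hηmem.2 hadjmem.2]
    refine tsum_congr fun j => ?_
    have hpj : p j t * u.adj ψζ j t = u.adj ψζ j t := by
      have := congrArg (fun f : C(T,ℂ) => f t) (hadjmem.1 j)
      simpa [ContinuousMap.mul_apply] using this
    simp only [hψη, Pi.smul_apply, ContinuousMap.smul_apply, smul_eq_mul]
    calc (starRingEnd ℂ) (u.adj ψζ j t) * ((η : ∀ _ : I, ℂ) j * p j t)
        = (starRingEnd ℂ) (u.adj ψζ j t) * p j t * (η : ∀ _ : I, ℂ) j := by ring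
      _ = (starRingEnd ℂ) (p j t * u.adj ψζ j t) * (η : ∀ _ : I, ℂ) j := by
          rw [map_mul, pjt_conj hp]; ring
      _ = (starRingEnd ℂ) (u.adj ψζ j t) * (η : ∀ _ : I, ℂ) j := by rw [hpj]
  have hEq : (∑' j, (starRingEnd ℂ) ((ζ : ∀ _ : I, ℂ) j) * u.toFun ψη j t)
      = ∑' j, (starRingEnd ℂ) (u.adj ψζ j t) * (η : ∀ _ : I, ℂ) j := by
    rw [← hL, ← hR, base2]
  have hinnerL : (inner ℂ ζ (a η) : ℂ) = ∑' j, (starRingEnd ℂ) ((ζ : ∀ _ : I, ℂ) j) * u.toFun ψη j t := by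
    rw [ell2_inner_eq]
    exact tsum_congr fun j => by rw [ha η j]
  have hinnerR : (inner ℂ (d ζ) η : ℂ) = ∑' j, (starRingEnd ℂ) (u.adj ψζ j t) * (η : ∀ _ : I, ℂ) j := by
    rw [ell2_inner_eq]
    exact tsum_congr fun j => by rw [hd ζ j]
  rw [hinnerR, hinnerL, hEq]

/-- part (iv): injectivity. -/
lemma part_inj {p : I → C(T,ℂ)} (hp : ∀ i t, p i t = 0 ∨ p i t = 1) (u : Adjointable p)
    (h : ∀ (t : T) (ζ : ell2 I) (i : I),
      u.toFun (fun j => ((ζ : ∀ _ : I, ℂ) j) • p j) i t = 0)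
    (ξ : I → C(T,ℂ)) (hξ : MemH p ξ) (i : I) : u.toFun ξ i = 0 := by
  ext t
  set ζ : ell2 I := psit ξ hξ.2 t with hζ
  have hloc : u.toFun ξ i t = u.toFun (fun j => ((ζ : ∀ _ : I, ℂ) j) • p j) i t := by
    refine local_eq u hξ (memH_psi hp ζ) (fun j => ?_) i
    have hpj : p j t * ξ j t = ξ j t := by
      have := congrArg (fun f : C(T,ℂ) => f t) (hξ.1 j)
      simpa [ContinuousMap.mul_apply] using this
    simp only [ContinuousMap.smul_apply, smul_eq_mul, hζ, psit_apply]
    rw [mul_comm (ξ j t) (p j t), hpj]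
  rw [hloc, h t ζ i]
  simp

lemma ell2_summable_sq (ζ : ell2 I) : Summable fun i => ‖(ζ : ∀ _ : I, ℂ) i‖^2 := by
  have := (lp.memℓp ζ).summable (by norm_num : 0 < (2:ℝ≥0∞).toReal)
  exact this.congr fun j => rpow_two_eq _ (norm_nonneg _)

lemma ell2_norm_sq (ζ : ell2 I) : ‖ζ‖^2 = ∑' i, ‖(ζ : ∀ _ : I, ℂ) i‖^2 := by
  have := lp.norm_rpow_eq_tsum (by norm_num : 0 < (2:ℝ≥0∞).toReal) ζ
  rw [rpow_two_eq _ (norm_nonneg ζ)] at this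
  rw [this]
  exact tsum_congr fun i => rpow_two_eq _ (norm_nonneg _)

lemma hnorm_psi_le {p : I → C(T,ℂ)} (hp : ∀ i t, p i t = 0 ∨ p i t = 1) (ζ : ell2 I) :
    hnorm (fun j => ((ζ : ∀ _ : I, ℂ) j) • p j) ≤ ‖ζ‖ := by
  have hmem := memH_psi hp ζ
  have hnormle : ‖hinner (fun j => ((ζ : ∀ _ : I, ℂ) j) • p j)
      (fun j => ((ζ : ∀ _ : I, ℂ) j) • p j)‖ ≤ ‖ζ‖^2 := by
    rw [ContinuousMap.norm_le _ (by positivity)]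
    intro s
    rw [hinner_apply hmem.2 hmem.2]
    have hterm : ∀ j, ‖(starRingEnd ℂ) (((ζ : ∀ _ : I, ℂ) j • p j) s) * (((ζ : ∀ _ : I, ℂ) j • p j) s)‖
        ≤ ‖(ζ : ∀ _ : I, ℂ) j‖^2 := by
      intro j
      rw [norm_mul, RCLike.norm_conj, ← sq]
      have : ‖(((ζ : ∀ _ : I, ℂ) j • p j) : C(T,ℂ)) s‖ ≤ ‖(ζ : ∀ _ : I, ℂ) j‖ := by
        rw [ContinuousMap.smul_apply, smul_eq_mul, norm_mul]
        rcases hp j s with h | h <;> simp [h]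
      exact pow_le_pow_left₀ (norm_nonneg _) this 2
    have hsum : Summable fun j => ‖(starRingEnd ℂ) (((ζ : ∀ _ : I, ℂ) j • p j) s)
        * (((ζ : ∀ _ : I, ℂ) j • p j) s)‖ :=
      Summable.of_nonneg_of_le (fun j => norm_nonneg _) hterm (ell2_summable_sq ζ)
    calc ‖∑' j, (starRingEnd ℂ) (((ζ : ∀ _ : I, ℂ) j • p j) s) * (((ζ : ∀ _ : I, ℂ) j • p j) s)‖
        ≤ ∑' j, ‖(starRingEnd ℂ) (((ζ : ∀ _ : I, ℂ) j • p j) s) * (((ζ : ∀ _ : I, ℂ) j • p j) s)‖ :=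
          norm_tsum_le_tsum_norm hsum
      _ ≤ ∑' j, ‖(ζ : ∀ _ : I, ℂ) j‖^2 := Summable.tsum_le_tsum hterm hsum (ell2_summable_sq ζ)
      _ = ‖ζ‖^2 := (ell2_norm_sq ζ).symm
  rw [hnorm]
  calc Real.sqrt ‖hinner _ _‖ ≤ Real.sqrt (‖ζ‖^2) := Real.sqrt_le_sqrt hnormle
    _ = ‖ζ‖ := Real.sqrt_sq (norm_nonneg _)

@[simp] lemma rankOne_apply {F : Type*} [NormedAddCommGroup F] [InnerProductSpace ℂ F]
    (x y z : F) : rankOne x y z = (inner ℂ y z : ℂ) • x := rfl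

lemma norm_rankOne_le {F : Type*} [NormedAddCommGroup F] [InnerProductSpace ℂ F]
    (x y : F) : ‖rankOne x y‖ ≤ ‖y‖ * ‖x‖ := by
  refine ContinuousLinearMap.opNorm_le_bound _ (by positivity) fun z => ?_
  rw [rankOne_apply, norm_smul]
  calc ‖(inner ℂ y z : ℂ)‖ * ‖x‖ ≤ ‖y‖ * ‖z‖ * ‖x‖ :=
        mul_le_mul_of_nonneg_right (norm_inner_le_norm y z) (norm_nonneg x)
    _ = ‖y‖ * ‖x‖ * ‖z‖ := by ring

lemma rankOne_diff {F : Type*} [NormedAddCommGroup F] [InnerProductSpace ℂ F]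
    (x x' y y' : F) :
    rankOne x y - rankOne x' y' = rankOne (x - x') y + rankOne x' (y - y') := by
  ext z
  simp only [ContinuousLinearMap.sub_apply, ContinuousLinearMap.add_apply, rankOne_apply,
    inner_sub_left, smul_sub, sub_smul]
  abel

lemma isCompactOperator_rankOne {F : Type*} [NormedAddCommGroup F] [InnerProductSpace ℂ F]
    (x y : F) : IsCompactOperator (rankOne x y) := by
  refine ⟨(fun c : ℂ => c • x) '' Metric.closedBall 0 ‖y‖,
    (isCompact_closedBall 0 ‖y‖).image (by continuity), ?_⟩
  refine Filter.mem_of_superset (Metric.ball_mem_nhds 0 one_pos) fun z hz => ?_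
  refine ⟨(inner ℂ y z : ℂ), ?_, rfl⟩
  rw [Metric.mem_closedBall, dist_zero_right]
  calc ‖(inner ℂ y z : ℂ)‖ ≤ ‖y‖ * ‖z‖ := norm_inner_le_norm y z
    _ ≤ ‖y‖ * 1 := by
        refine mul_le_mul_of_nonneg_left ?_ (norm_nonneg y)
        have hz' := Metric.mem_ball.mp hz
        rw [dist_zero_right] at hz'
        exact hz'.le
    _ = ‖y‖ := mul_one _

lemma ell2_coe_sum {κ : Type*} (s : Finset κ) (x : κ → ell2 I) (i : I) :
    ((∑ k ∈ s, x k : ell2 I) : ∀ _ : I, ℂ) i = ∑ k ∈ s, ((x k : ell2 I) : ∀ _ : I, ℂ) i := by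
  classical
  induction s using Finset.induction_on with
  | empty => simp
  | @insert a s' hk ih =>
    rw [Finset.sum_insert hk, Finset.sum_insert hk, ← ih]
    simp [lp.coeFn_add]

lemma inner_psit_eq {p : I → C(T,ℂ)} (hp : ∀ i t, p i t = 0 ∨ p i t = 1)
    (ζ : ell2 I) {η : I → C(T,ℂ)} (hη : MemH p η) (t : T) :
    (inner ℂ (psit η hη.2 t) ζ : ℂ) = hinner (fun j => ((ζ : ∀ _ : I, ℂ) j) • p j) η t := by
  rw [ell2_inner_eq, hinner_apply (memH_psi hp ζ).2 hη.2]
  refine tsum_congr fun j => ?_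
  have hpj : p j t * η j t = η j t := by
    have := congrArg (fun f : C(T,ℂ) => f t) (hη.1 j)
    simpa [ContinuousMap.mul_apply] using this
  simp only [psit_apply, ContinuousMap.smul_apply, smul_eq_mul]
  calc (starRingEnd ℂ) (η j t) * (ζ : ∀ _ : I, ℂ) j
      = (starRingEnd ℂ) (p j t * η j t) * (ζ : ∀ _ : I, ℂ) j := by rw [hpj]
    _ = (starRingEnd ℂ) (η j t) * ((ζ : ∀ _ : I, ℂ) j * p j t) := by
        rw [map_mul, pjt_conj hp]; ring

lemma approx_bound {p : I → C(T,ℂ)} (hp : ∀ i t, p i t = 0 ∨ p i t = 1)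
    (u : Adjointable p) (t : T) (a : ell2 I →L[ℂ] ell2 I)
    (ha : Represents p t u.toFun a) {ε : ℝ} (hε : 0 < ε)
    {m : ℕ} (ξs ηs : Fin m → (I → C(T,ℂ)))
    (hmem : ∀ k, MemH p (ξs k) ∧ MemH p (ηs k))
    (happ : ∀ ζ, MemH p ζ → hnorm ζ ≤ 1 →
      hnorm (fun i => u.toFun ζ i - ∑ k, ξs k i * hinner ζ (ηs k)) ≤ ε) :
    ‖a - ∑ k, rankOne (psit (ξs k) (hmem k).1.2 t) (psit (ηs k) (hmem k).2.2 t)‖ ≤ ε := by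
  set F : ell2 I →L[ℂ] ell2 I :=
    ∑ k, rankOne (psit (ξs k) (hmem k).1.2 t) (psit (ηs k) (hmem k).2.2 t) with hF
  have step : ∀ ζ : ell2 I, ‖ζ‖ ≤ 1 → ‖(a - F) ζ‖ ≤ ε := by
    intro ζ hζ1
    set ψζ : I → C(T,ℂ) := fun j => ((ζ : ∀ _ : I, ℂ) j) • p j with hψζ
    have hψmem : MemH p ψζ := memH_psi hp ζ
    have hψ1 : hnorm ψζ ≤ 1 := (hnorm_psi_le hp ζ).trans hζ1
    set δ : I → C(T,ℂ) := fun i => u.toFun ψζ i - ∑ k, ξs k i * hinner ψζ (ηs k) with hδdef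
    have hδ : hnorm δ ≤ ε := happ ψζ hψmem hψ1
    have hδmem : MemH p δ := by
      refine memH_sub (u.mem' _ hψmem) ?_
      exact memH_finsum Finset.univ (fun k i => ξs k i * hinner ψζ (ηs k))
        (fun k _ => memH_mul (hmem k).1 _)
    have hcoord : ∀ i, (((a - F) ζ : ell2 I) : ∀ _ : I, ℂ) i = δ i t := by
      intro i
      have h1 : (((a - F) ζ : ell2 I) : ∀ _ : I, ℂ) i
          = ((a ζ : ell2 I) : ∀ _ : I, ℂ) i - ((F ζ : ell2 I) : ∀ _ : I, ℂ) i := by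
        rw [ContinuousLinearMap.sub_apply]
        simp [lp.coeFn_sub]
      have h2 : ((F ζ : ell2 I) : ∀ _ : I, ℂ) i
          = ∑ k, (inner ℂ (psit (ηs k) (hmem k).2.2 t) ζ : ℂ) * (ξs k i t) := by
        rw [hF, ContinuousLinearMap.sum_apply]
        rw [ell2_coe_sum]
        refine Finset.sum_congr rfl fun k _ => ?_
        rw [rankOne_apply]
        simp [lp.coeFn_smul]
      rw [h1, h2, ha ζ i]
      simp only [hδdef, ContinuousMap.sub_apply, ContinuousMap.sum_apply,
        ContinuousMap.mul_apply]
      congr 1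
      refine Finset.sum_congr rfl fun k _ => ?_
      rw [inner_psit_eq hp ζ (hmem k).2 t]
      ring
    refine ell2_norm_le hε.le fun G => ?_
    calc ∑ i ∈ G, ‖(((a - F) ζ : ell2 I) : ∀ _ : I, ℂ) i‖^2
        = ∑ i ∈ G, ‖δ i t‖^2 := by
          refine Finset.sum_congr rfl fun i _ => by rw [hcoord i]
      _ ≤ hnorm δ ^ 2 := sum_sq_le_hnorm hδmem G t
      _ ≤ ε^2 := pow_le_pow_left₀ (hnorm_nonneg _) hδ 2
  refine ContinuousLinearMap.opNorm_le_bound _ hε.le fun ζ => ?_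
  by_cases hζ0 : ζ = 0
  · simp [hζ0]
  · have hpos : 0 < ‖ζ‖ := norm_pos_iff.mpr hζ0
    set ζ' : ell2 I := ‖ζ‖⁻¹ • ζ with hζ'
    have hζ'1 : ‖ζ'‖ ≤ 1 := by
      rw [hζ', norm_smul, norm_inv, norm_norm, inv_mul_cancel₀ hpos.ne']
    have hsplit : (a - F) ζ = ‖ζ‖ • (a - F) ζ' := by
      rw [hζ', ContinuousLinearMap.map_smul_of_tower, smul_smul]
      rw [mul_inv_cancel₀ hpos.ne', one_smul]
    rw [hsplit, norm_smul, norm_norm]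
    calc ‖ζ‖ * ‖(a - F) ζ'‖ ≤ ‖ζ‖ * ε := mul_le_mul_of_nonneg_left (step ζ' hζ'1) hpos.le
      _ = ε * ‖ζ‖ := by ring

lemma isCompactOperator_sum {F : Type*} [NormedAddCommGroup F] [InnerProductSpace ℂ F]
    {κ : Type*} (s : Finset κ) (A : κ → (F →L[ℂ] F))
    (h : ∀ k ∈ s, IsCompactOperator ⇑(A k)) : IsCompactOperator ⇑(∑ k ∈ s, A k) := by
  classical
  induction s using Finset.induction_on with
  | empty => simpa using isCompactOperator_zero
  | @insert a s' hk ih =>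
    rw [Finset.sum_insert hk]
    have h1 : IsCompactOperator ⇑(A a) := h a (Finset.mem_insert_self a s')
    have h2 := ih fun k hks => h k (Finset.mem_insert_of_mem hks)
    have := h1.add h2
    exact this

/-- part (1): compactness of `φ_t u`. -/
lemma part_compact {p : I → C(T,ℂ)} (hp : ∀ i t, p i t = 0 ∨ p i t = 1)
    (u : Adjointable p) (hu : CompactH p u.toFun) (t : T) (a : ell2 I →L[ℂ] ell2 I)
    (ha : Represents p t u.toFun a) : IsCompactOperator ⇑a := by
  have hFn : ∀ n : ℕ, ∃ F : ell2 I →L[ℂ] ell2 I,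
      IsCompactOperator ⇑F ∧ ‖a - F‖ ≤ 1/(n+1) := by
    intro n
    obtain ⟨m, ξs, ηs, hmem, happ⟩ := hu (1/(n+1)) (by positivity)
    refine ⟨∑ k, rankOne (psit (ξs k) (hmem k).1.2 t) (psit (ηs k) (hmem k).2.2 t), ?_,
      approx_bound hp u t a ha (by positivity) ξs ηs hmem happ⟩
    exact isCompactOperator_sum Finset.univ _ fun k _ => isCompactOperator_rankOne _ _
  choose F hFc hFle using hFn
  have htend : Filter.Tendsto F Filter.atTop (𝓝 a) := by
    rw [tendsto_iff_dist_tendsto_zero]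
    refine squeeze_zero (fun n => dist_nonneg) (fun n => ?_)
      tendsto_one_div_add_atTop_nhds_zero_nat
    rw [dist_eq_norm, ← norm_neg, neg_sub]
    exact hFle n
  exact isCompactOperator_of_tendsto htend (Filter.Eventually.of_forall hFc)

/-- continuity of `t ↦ ψ_t ξ`. -/
lemma psit_continuous {ξ : I → C(T,ℂ)} (hξ : Summable fun i => star (ξ i) * ξ i) :
    Continuous fun t => psit ξ hξ t := by
  classical
  rw [continuous_iff_continuousAt]
  intro t0
  rw [ContinuousAt, Metric.tendsto_nhds]
  intro ε hε
  obtain ⟨s, hs⟩ := summable_iff_vanishing_norm.1 hξ ((ε/4)^2) (by positivity)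
  have hmemtr : ∀ t : T, Memℓp (fun j => if j ∈ s then ξ j t else 0) 2 := by
    intro t
    apply memℓp_gen' (C := ‖∑' i, star (ξ i) * ξ i‖)
    intro G
    calc ∑ i ∈ G, ‖if i ∈ s then ξ i t else 0‖ ^ (2:ℝ≥0∞).toReal
        ≤ ∑ i ∈ G, ‖ξ i t‖ ^ 2 := by
          refine Finset.sum_le_sum fun i _ => ?_
          by_cases hi : i ∈ s
          · simp only [hi, if_true]
            rw [rpow_two_eq _ (norm_nonneg _)]
          · simp only [hi, if_false, norm_zero]
            rw [Real.zero_rpow (by norm_num)]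
            positivity
      _ ≤ _ := sum_sq_le hξ G t
  set y : T → ell2 I := fun t => ⟨fun j => if j ∈ s then ξ j t else 0, hmemtr t⟩ with hy
  have claim1 : ∀ t, ‖psit ξ hξ t - y t‖ ≤ ε/4 := by
    intro t
    refine ell2_norm_le (by positivity) fun G => ?_
    have hcoord : ∀ j, ((psit ξ hξ t - y t : ell2 I) : ∀ _ : I, ℂ) j
        = if j ∈ s then 0 else ξ j t := by
      intro j
      rw [lp.coeFn_sub, Pi.sub_apply]
      by_cases hj : j ∈ s <;> simp [hy, psit_apply, hj]
    calc ∑ i ∈ G, ‖((psit ξ hξ t - y t : ell2 I) : ∀ _ : I, ℂ) i‖^2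
        = ∑ i ∈ G, (if i ∈ s then 0 else ‖ξ i t‖^2) := by
          refine Finset.sum_congr rfl fun i _ => ?_
          rw [hcoord i]
          by_cases hi : i ∈ s <;> simp [hi]
      _ = ∑ i ∈ G \ s, ‖ξ i t‖^2 := by
          rw [Finset.sdiff_eq_filter, Finset.sum_filter]
          refine Finset.sum_congr rfl fun i _ => ?_
          by_cases hi : i ∈ s <;> simp [hi]
      _ = ‖(∑ i ∈ G \ s, star (ξ i) * ξ i) t‖ := (norm_sum_starmul_eval ξ (G \ s) t).symm
      _ ≤ ‖∑ i ∈ G \ s, star (ξ i) * ξ i‖ := ContinuousMap.norm_coe_le_norm _ t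
      _ ≤ (ε/4)^2 := (hs _ Finset.sdiff_disjoint).le
  -- the finitely supported part is continuous
  have claim2 : Continuous (fun t => ∑ j ∈ s, ‖ξ j t - ξ j t0‖^2) :=
    continuous_finset_sum s fun j _ =>
      (((map_continuous (ξ j)).sub continuous_const).norm.pow 2)
  have hg0 : (∑ j ∈ s, ‖ξ j t0 - ξ j t0‖^2) = 0 := by simp
  have hlim : Filter.Tendsto (fun t => ∑ j ∈ s, ‖ξ j t - ξ j t0‖^2) (𝓝 t0) (𝓝 0) := by
    have h := claim2.continuousAt (x := t0)
    simp only [ContinuousAt] at h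
    simpa [hg0] using h
  have hev : ∀ᶠ t in 𝓝 t0, (∑ j ∈ s, ‖ξ j t - ξ j t0‖^2) < (ε/4)^2 :=
    hlim.eventually_lt_const (by positivity)
  refine hev.mono fun t hgt => ?_
  have claim3 : ‖y t - y t0‖ ≤ ε/4 := by
    refine ell2_norm_le (by positivity) fun G => ?_
    have hcoord : ∀ j, ((y t - y t0 : ell2 I) : ∀ _ : I, ℂ) j
        = if j ∈ s then ξ j t - ξ j t0 else 0 := by
      intro j
      rw [lp.coeFn_sub, Pi.sub_apply]
      by_cases hj : j ∈ s <;> simp [hy, hj]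
    calc ∑ i ∈ G, ‖((y t - y t0 : ell2 I) : ∀ _ : I, ℂ) i‖^2
        = ∑ i ∈ G, (if i ∈ s then ‖ξ i t - ξ i t0‖^2 else 0) := by
          refine Finset.sum_congr rfl fun i _ => ?_
          rw [hcoord i]
          by_cases hi : i ∈ s <;> simp [hi]
      _ = ∑ i ∈ G ∩ s, ‖ξ i t - ξ i t0‖^2 := by
          rw [← Finset.sum_filter, Finset.filter_mem_eq_inter]
      _ ≤ ∑ i ∈ s, ‖ξ i t - ξ i t0‖^2 := by
          refine Finset.sum_le_sum_of_subset_of_nonneg Finset.inter_subset_right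
            fun i _ _ => by positivity
      _ ≤ (ε/4)^2 := hgt.le
  calc dist (psit ξ hξ t) (psit ξ hξ t0)
      ≤ dist (psit ξ hξ t) (y t) + dist (y t) (y t0) + dist (y t0) (psit ξ hξ t0) :=
        dist_triangle4 _ _ _ _
    _ ≤ ε/4 + ε/4 + ε/4 := by
        refine add_le_add (add_le_add ?_ ?_) ?_
        · rw [dist_eq_norm]; exact claim1 t
        · rw [dist_eq_norm]; exact claim3
        · rw [dist_comm, dist_eq_norm]; exact claim1 t0
    _ < ε := by linarith

/-- part (2): norm continuity of `t ↦ φ_t u`. -/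
lemma part_cont {p : I → C(T,ℂ)} (hp : ∀ i t, p i t = 0 ∨ p i t = 1)
    (u : Adjointable p) (hu : CompactH p u.toFun)
    (A : T → (ell2 I →L[ℂ] ell2 I)) (hA : ∀ t, Represents p t u.toFun (A t)) :
    Continuous A := by
  rw [continuous_iff_continuousAt]
  intro t0
  rw [ContinuousAt, Metric.tendsto_nhds]
  intro ε hε
  obtain ⟨m, ξs, ηs, hmem, happ⟩ := hu (ε/8) (by positivity)
  set x : Fin m → T → ell2 I := fun k t => psit (ξs k) (hmem k).1.2 t with hx
  set z : Fin m → T → ell2 I := fun k t => psit (ηs k) (hmem k).2.2 t with hz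
  set Fop : T → (ell2 I →L[ℂ] ell2 I) := fun t => ∑ k, rankOne (x k t) (z k t) with hFop
  have hAF : ∀ t, ‖A t - Fop t‖ ≤ ε/8 := fun t =>
    approx_bound hp u t (A t) (hA t) (by positivity) ξs ηs hmem happ
  set G : T → ℝ := fun t => ∑ k,
    (hnorm (ηs k) * ‖x k t - x k t0‖ + hnorm (ξs k) * ‖z k t - z k t0‖) with hG
  have hFdiff : ∀ t, ‖Fop t - Fop t0‖ ≤ G t := by
    intro t
    have hsub : Fop t - Fop t0 = ∑ k, (rankOne (x k t) (z k t) - rankOne (x k t0) (z k t0)) := by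
      rw [hFop, ← Finset.sum_sub_distrib]
    rw [hsub]
    refine (norm_sum_le _ _).trans ?_
    refine Finset.sum_le_sum fun k _ => ?_
    rw [rankOne_diff]
    refine (norm_add_le _ _).trans ?_
    refine add_le_add ((norm_rankOne_le _ _).trans ?_) ((norm_rankOne_le _ _).trans ?_)
    · refine mul_le_mul_of_nonneg_right ?_ (norm_nonneg _)
      exact psit_norm_le _ t
    · rw [mul_comm]
      refine mul_le_mul_of_nonneg_right ?_ (norm_nonneg _)
      exact psit_norm_le _ t0
  have hGcont : Continuous G := by
    refine continuous_finset_sum _ fun k _ => ?_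
    refine Continuous.add ?_ ?_
    · exact continuous_const.mul ((psit_continuous (hmem k).1.2).sub continuous_const).norm
    · exact continuous_const.mul ((psit_continuous (hmem k).2.2).sub continuous_const).norm
  have hG0 : G t0 = 0 := by simp [hG]
  have hlim : Filter.Tendsto G (𝓝 t0) (𝓝 0) := by
    have h := hGcont.continuousAt (x := t0)
    simp only [ContinuousAt] at h
    rwa [hG0] at h
  have hev : ∀ᶠ t in 𝓝 t0, G t < ε/2 := hlim.eventually_lt_const (by positivity)
  refine hev.mono fun t hGt => ?_
  have hdecomp : A t - A t0 = (A t - Fop t) + (Fop t - Fop t0) + (Fop t0 - A t0) := by abel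
  calc dist (A t) (A t0) = ‖A t - A t0‖ := dist_eq_norm _ _
    _ = ‖(A t - Fop t) + (Fop t - Fop t0) + (Fop t0 - A t0)‖ := by rw [hdecomp]
    _ ≤ ‖A t - Fop t‖ + ‖Fop t - Fop t0‖ + ‖Fop t0 - A t0‖ := norm_add₃_le
    _ ≤ ε/8 + G t + ε/8 := by
        refine add_le_add (add_le_add (hAF t) (hFdiff t)) ?_
        rw [norm_sub_rev]
        exact hAF t0
    _ < ε/8 + ε/2 + ε/8 := by linarith
    _ < ε := by linarith

end Dev

/-- For `u ∈ K(H)`: each `φ_t u` is a compact operator on `ℓ²(I)`,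
the map `ū : t ↦ φ_t u` is norm continuous, and `u ↦ ū` is an injective *-homomorphism
`K(H) → C(T, K(ℓ²(I)))`. -/
theorem stmt5 {T I : Type*} [TopologicalSpace T] [CompactSpace T] [T2Space T]
    (p : I → C(T, ℂ)) (hp : ∀ i t, p i t = 0 ∨ p i t = 1)
    (u v : Adjointable p) (hu : CompactH p u.toFun) (hv : CompactH p v.toFun) :
    -- `φ_t u` is a compact operator for every `t`
    (∀ (t : T) (a : ell2 I →L[ℂ] ell2 I), Represents p t u.toFun a →
      IsCompactOperator (⇑a)) ∧
    -- `ū : t ↦ φ_t u` is continuous for the operator norm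
    (∀ A : T → (ell2 I →L[ℂ] ell2 I), (∀ t, Represents p t u.toFun (A t)) →
      Continuous A) ∧
    -- `u ↦ ū` is a *-homomorphism
    (∀ (t : T) (a b c d e : ell2 I →L[ℂ] ell2 I) (α β : ℂ),
      Represents p t u.toFun a → Represents p t v.toFun b →
      Represents p t (u.toFun ∘ v.toFun) c → Represents p t u.adj d →
      Represents p t (fun ξ => α • u.toFun ξ + β • v.toFun ξ) e →
        c = a ∘L b ∧ d = ContinuousLinearMap.adjoint a ∧ e = α • a + β • b) ∧
    -- `u ↦ ū` is injective on `K(H)`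
    ((∀ (t : T) (ζ : ell2 I) (i : I),
        u.toFun (fun j => ((ζ : ∀ _ : I, ℂ) j) • p j) i t = 0) →
      ∀ ξ, MemH p ξ → ∀ i, u.toFun ξ i = 0) := by
  refine ⟨?_, ?_, ?_, ?_⟩
  · exact fun t a ha => part_compact hp u hu t a ha
  · exact fun A hA => part_cont hp u hu A hA
  · intro t a b c d e α β ha hb hc hd he
    exact ⟨part_c hp u v t a b c ha hb hc, part_d hp u t a d ha hd,
      part_e hp u v t a b e α β ha hb he⟩
  · exact fun h ξ hξ i => part_inj hp u h ξ hξ i
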